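/- Let b ≥ 1, c ≥ b+1, α ≥ 1, β ≥ α+1, p > 0 and z ∈ ℝ. Then ₁F₁^{(α,β;p)}(b;c;z) ≤ (λ_{α−1,β−α−1}/(4 p B(α,β−α))) · ₁F₁(b;c;z). -/

import Mathlib

open Real MeasureTheory

/-- Classical Euler beta function `B(x,y) = ∫₀¹ t^(x-1) (1-t)^(y-1) dt`. -/
noncomputable def eulerBeta (x y : ℝ) : ℝ :=
  ∫ t in (0:ℝ)..1, t ^ (x - 1) * (1 - t) ^ (y - 1)

/-- `λ_{x,y} = x^x y^y / (x+y)^(x+y)`; the convention `0^0 = 1` is automatic for `rpow`. -/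
noncomputable def lam (x y : ℝ) : ℝ := x ^ x * y ^ y / (x + y) ^ (x + y)

/-- Pochhammer symbol `(x)_n = x (x+1) ⋯ (x+n-1)`. -/
noncomputable def poch (x : ℝ) (n : ℕ) : ℝ := ∏ k ∈ Finset.range n, (x + k)

/-- Confluent hypergeometric (Kummer) function `₁F₁(b;c;z)`. -/
noncomputable def oneF1 (b c z : ℝ) : ℝ :=
  ∑' n : ℕ, poch b n / poch c n * z ^ n / (Nat.factorial n : ℝ)

/-- Generalized confluent hypergeometric function `₁F₁^(α,β;p)(b;c;z)` (integral form). -/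
noncomputable def genOneF1 (α β p b c z : ℝ) : ℝ :=
  (1 / eulerBeta b (c - b)) *
    ∫ t in (0:ℝ)..1,
      t ^ (b - 1) * (1 - t) ^ (c - b - 1) * Real.exp (z * t) * oneF1 α β (-p / (t * (1 - t)))

lemma ofReal_eulerBeta (x y : ℝ) :
    Complex.betaIntegral x y = (eulerBeta x y : ℂ) := by
  rw [Complex.betaIntegral, eulerBeta, ← intervalIntegral.integral_ofReal]
  refine intervalIntegral.integral_congr fun t ht => ?_
  rw [Set.uIcc_of_le zero_le_one] at ht
  have h1 : (0:ℝ) ≤ 1 - t := by linarith [ht.2]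
  rw [Complex.ofReal_mul, Complex.ofReal_cpow ht.1, Complex.ofReal_cpow h1]
  push_cast
  ring

lemma eulerBeta_eq_Gamma {x y : ℝ} (hx : 0 < x) (hy : 0 < y) :
    eulerBeta x y = Real.Gamma x * Real.Gamma y / Real.Gamma (x + y) := by
  have h := Complex.Gamma_mul_Gamma_eq_betaIntegral (s := (x:ℂ)) (t := (y:ℂ))
    (by simpa using hx) (by simpa using hy)
  rw [ofReal_eulerBeta x y, ← Complex.ofReal_add, Complex.Gamma_ofReal, Complex.Gamma_ofReal,
    Complex.Gamma_ofReal] at h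
  have h' : Real.Gamma x * Real.Gamma y = Real.Gamma (x + y) * eulerBeta x y := by
    exact_mod_cast h
  have hpos := Real.Gamma_pos_of_pos (by linarith : 0 < x + y)
  rw [eq_div_iff hpos.ne']
  linarith

lemma eulerBeta_pos {x y : ℝ} (hx : 0 < x) (hy : 0 < y) : 0 < eulerBeta x y := by
  rw [eulerBeta_eq_Gamma hx hy]
  exact div_pos (mul_pos (Real.Gamma_pos_of_pos hx) (Real.Gamma_pos_of_pos hy))
    (Real.Gamma_pos_of_pos (by linarith))

lemma poch_pos {x : ℝ} (hx : 0 < x) (n : ℕ) : 0 < poch x n :=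
  Finset.prod_pos fun k _ => by positivity

lemma Gamma_poch {x : ℝ} (hx : 0 < x) (n : ℕ) :
    Real.Gamma (x + n) = Real.Gamma x * poch x n := by
  induction n with
  | zero => simp [poch]
  | succ n ih =>
    have hxn : (0:ℝ) < x + n := by positivity
    have h : (x + ((n:ℕ)+1:ℕ) : ℝ) = (x + n) + 1 := by push_cast; ring
    rw [h, Real.Gamma_add_one hxn.ne', ih]
    unfold poch
    rw [Finset.prod_range_succ]
    ring

lemma eulerBeta_add_nat {x y : ℝ} (hx : 0 < x) (hy : 0 < y) (n : ℕ) :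
    eulerBeta (x + n) y = eulerBeta x y * (poch x n / poch (x + y) n) := by
  have h1 : (0:ℝ) < x + n := by positivity
  have hxy : (0:ℝ) < x + y := by linarith
  rw [eulerBeta_eq_Gamma h1 hy, eulerBeta_eq_Gamma hx hy]
  have h2 : x + (n:ℝ) + y = (x + y) + n := by ring
  rw [h2, Gamma_poch hx n, Gamma_poch hxy n]
  have g1 := (Real.Gamma_pos_of_pos hxy).ne'
  have g2 := (poch_pos hxy n).ne'
  field_simp

lemma integrableOn_of_bounded {f : ℝ → ℝ} (hf : Measurable f) {C : ℝ}
    (hC : ∀ t ∈ Set.Ioo (0:ℝ) 1, |f t| ≤ C) : IntegrableOn f (Set.Ioo (0:ℝ) 1) := by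
  refine Integrable.mono' (integrable_const C) hf.aestronglyMeasurable ?_
  filter_upwards [ae_restrict_mem measurableSet_Ioo] with t ht
  simpa using hC t ht

lemma kernel_nonneg {x y t : ℝ} (ht0 : 0 ≤ t) (ht1 : t ≤ 1) :
    0 ≤ t ^ x * (1 - t) ^ y :=
  mul_nonneg (Real.rpow_nonneg ht0 x) (Real.rpow_nonneg (by linarith) y)

lemma kernel_le_one {x y : ℝ} (hx : 0 ≤ x) (hy : 0 ≤ y) {t : ℝ} (ht0 : 0 ≤ t) (ht1 : t ≤ 1) :
    t ^ x * (1 - t) ^ y ≤ 1 := by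
  have h1 : t ^ x ≤ 1 := Real.rpow_le_one ht0 ht1 hx
  have h2 : (1 - t) ^ y ≤ 1 := Real.rpow_le_one (by linarith) (by linarith) hy
  have h3 : 0 ≤ t ^ x := Real.rpow_nonneg ht0 x
  have h4 : 0 ≤ (1 - t) ^ y := Real.rpow_nonneg (by linarith) y
  nlinarith

lemma integrable_GE (x y z : ℝ) (hx : 0 ≤ x) (hy : 0 ≤ y) :
    IntegrableOn (fun t => t ^ x * (1 - t) ^ y * Real.exp (z * t)) (Set.Ioo (0:ℝ) 1) := by
  refine integrableOn_of_bounded (by fun_prop) (C := Real.exp |z|) fun t ht => ?_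
  have h0 := kernel_nonneg (x := x) (y := y) ht.1.le ht.2.le
  have h1 := kernel_le_one hx hy ht.1.le ht.2.le
  have h2 : Real.exp (z * t) ≤ Real.exp |z| := by
    apply Real.exp_le_exp.2
    calc z * t ≤ |z * t| := le_abs_self _
      _ = |z| * |t| := abs_mul z t
      _ ≤ |z| * 1 := by
          apply mul_le_mul_of_nonneg_left _ (abs_nonneg z)
          rw [abs_of_nonneg ht.1.le]; exact ht.2.le
      _ = |z| := mul_one _
  rw [abs_of_nonneg (mul_nonneg h0 (Real.exp_pos _).le)]
  calc t ^ x * (1 - t) ^ y * Real.exp (z * t) ≤ 1 * Real.exp (z * t) := by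
        exact mul_le_mul_of_nonneg_right h1 (Real.exp_pos _).le
    _ = Real.exp (z * t) := one_mul _
    _ ≤ Real.exp |z| := h2

lemma eulerBeta_as_Ioo (x y : ℝ) :
    eulerBeta x y = ∫ t in Set.Ioo (0:ℝ) 1, t ^ (x - 1) * (1 - t) ^ (y - 1) := by
  rw [eulerBeta, intervalIntegral.integral_of_le zero_le_one, integral_Ioc_eq_integral_Ioo]

lemma kummer_rep {b c : ℝ} (hb : 1 ≤ b) (hcb : 1 ≤ c - b) (z : ℝ) :
    (∫ t in Set.Ioo (0:ℝ) 1, t ^ (b - 1) * (1 - t) ^ (c - b - 1) * Real.exp (z * t))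
      = eulerBeta b (c - b) * oneF1 b c z := by
  set F : ℕ → ℝ → ℝ := fun n t =>
    t ^ (b - 1) * (1 - t) ^ (c - b - 1) * (z ^ n * t ^ n / (Nat.factorial n : ℝ)) with hF
  have hb0 : (0:ℝ) < b := by linarith
  have hcb0 : (0:ℝ) < c - b := by linarith
  -- pointwise sum
  have hsum : ∀ t ∈ Set.Ioo (0:ℝ) 1,
      t ^ (b - 1) * (1 - t) ^ (c - b - 1) * Real.exp (z * t) = ∑' n, F n t := by
    intro t _
    have hexp : Real.exp (z * t) = ∑' n : ℕ, (z * t) ^ n / (Nat.factorial n : ℝ) := by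
      rw [Real.exp_eq_exp_ℝ, NormedSpace.exp_eq_tsum_div]
    rw [hexp, ← tsum_mul_left]
    exact tsum_congr fun n => by simp only [hF, mul_pow]; try ring
  -- integrability / norm bounds
  have hFabs : ∀ n : ℕ, ∀ t ∈ Set.Ioo (0:ℝ) 1, |F n t| ≤ |z| ^ n / (Nat.factorial n : ℝ) := by
    intro n t ht
    have h0 := kernel_nonneg (x := b - 1) (y := c - b - 1) ht.1.le ht.2.le
    have h1 := kernel_le_one (by linarith : (0:ℝ) ≤ b - 1)
      (by linarith : (0:ℝ) ≤ c - b - 1) ht.1.le ht.2.le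
    have htn : |t| ^ n ≤ 1 :=
      pow_le_one₀ (abs_nonneg t) (by rw [abs_of_nonneg ht.1.le]; exact ht.2.le)
    have hrest : |z ^ n * t ^ n / (Nat.factorial n : ℝ)| ≤ |z| ^ n / (Nat.factorial n : ℝ) := by
      rw [abs_div, abs_mul, abs_pow, abs_pow, Nat.abs_cast]
      calc |z| ^ n * |t| ^ n / (Nat.factorial n : ℝ)
          ≤ |z| ^ n * 1 / (Nat.factorial n : ℝ) := by gcongr
        _ = |z| ^ n / (Nat.factorial n : ℝ) := by ring
    rw [hF]
    simp only []
    rw [abs_mul, abs_of_nonneg h0]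
    calc (t ^ (b-1) * (1-t) ^ (c-b-1)) * |z ^ n * t ^ n / (Nat.factorial n : ℝ)|
        ≤ 1 * (|z| ^ n / (Nat.factorial n : ℝ)) := mul_le_mul h1 hrest (abs_nonneg _) zero_le_one
      _ = |z| ^ n / (Nat.factorial n : ℝ) := one_mul _
  have hFint : ∀ n : ℕ, IntegrableOn (F n) (Set.Ioo (0:ℝ) 1) := fun n =>
    integrableOn_of_bounded (by fun_prop) (hFabs n)
  have hnorm : ∀ n : ℕ, (∫ t in Set.Ioo (0:ℝ) 1, ‖F n t‖) ≤ |z| ^ n / (Nat.factorial n : ℝ) := by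
    intro n
    have hle : ∀ t ∈ Set.Ioo (0:ℝ) 1, ‖F n t‖ ≤ |z| ^ n / (Nat.factorial n : ℝ) := by
      intro t ht; rw [Real.norm_eq_abs]; exact hFabs n t ht
    calc (∫ t in Set.Ioo (0:ℝ) 1, ‖F n t‖)
        ≤ ∫ _t in Set.Ioo (0:ℝ) 1, (|z| ^ n / (Nat.factorial n : ℝ)) :=
          setIntegral_mono_on (hFint n).norm
            (integrableOn_const measure_Ioo_lt_top.ne) measurableSet_Ioo hle
      _ = |z| ^ n / (Nat.factorial n : ℝ) := by
          rw [setIntegral_const]; simp [Real.volume_Ioo]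
  have hsummable : Summable fun n : ℕ => ∫ t in Set.Ioo (0:ℝ) 1, ‖F n t‖ :=
    Summable.of_nonneg_of_le (fun n => integral_nonneg fun t => norm_nonneg _) hnorm
      (Real.summable_pow_div_factorial |z|)
  have hswap := MeasureTheory.integral_tsum_of_summable_integral_norm hFint hsummable
  have hFeval : ∀ n : ℕ, (∫ t in Set.Ioo (0:ℝ) 1, F n t)
      = eulerBeta b (c - b) * (poch b n / poch c n * z ^ n / (Nat.factorial n : ℝ)) := by
    intro n
    have e1 : ∀ t ∈ Set.Ioo (0:ℝ) 1,
        F n t = (z ^ n / (Nat.factorial n : ℝ)) * (t ^ (b + (n:ℝ) - 1) * (1 - t) ^ (c - b - 1)) := by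
      intro t ht
      rw [hF]
      simp only []
      rw [show b + (n:ℝ) - 1 = (b - 1) + (n:ℝ) by ring, Real.rpow_add ht.1, Real.rpow_natCast]
      ring
    rw [setIntegral_congr_fun measurableSet_Ioo e1, MeasureTheory.integral_const_mul,
      ← eulerBeta_as_Ioo (b + (n:ℝ)) (c - b), eulerBeta_add_nat hb0 hcb0 n,
      show b + (c - b) = c by ring]
    ring
  rw [setIntegral_congr_fun measurableSet_Ioo (fun t ht => hsum t ht), ← hswap, oneF1,
    ← tsum_mul_left]
  exact tsum_congr fun n => hFeval n

lemma lam_nonneg {x y : ℝ} (hx : 0 ≤ x) (hy : 0 ≤ y) : 0 ≤ lam x y :=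
  div_nonneg (mul_nonneg (Real.rpow_nonneg hx x) (Real.rpow_nonneg hy y))
    (Real.rpow_nonneg (by linarith) (x + y))

lemma lam_zero_left {y : ℝ} (hy : 0 ≤ y) : lam 0 y = 1 := by
  rcases eq_or_lt_of_le hy with h | h
  · rw [lam, ← h]; norm_num
  · rw [lam, Real.rpow_zero, zero_add, one_mul, div_self (Real.rpow_pos_of_pos h y).ne']

lemma lam_zero_right {x : ℝ} (hx : 0 ≤ x) : lam x 0 = 1 := by
  rcases eq_or_lt_of_le hx with h | h
  · rw [lam, ← h]; norm_num
  · rw [lam, Real.rpow_zero, add_zero, mul_one, div_self (Real.rpow_pos_of_pos h x).ne']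

lemma kernel_le_lam {x y : ℝ} (hx : 0 ≤ x) (hy : 0 ≤ y) {s : ℝ} (hs0 : 0 ≤ s) (hs1 : s ≤ 1) :
    s ^ x * (1 - s) ^ y ≤ lam x y := by
  have h1s : (0:ℝ) ≤ 1 - s := by linarith
  rcases eq_or_lt_of_le hx with hx0 | hx0
  · rw [← hx0, Real.rpow_zero, one_mul, lam_zero_left hy]
    exact Real.rpow_le_one h1s (by linarith) hy
  rcases eq_or_lt_of_le hy with hy0 | hy0
  · rw [← hy0, Real.rpow_zero, mul_one, lam_zero_right hx]
    exact Real.rpow_le_one hs0 hs1 hx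
  have hxy : 0 < x + y := by linarith
  rw [lam, le_div_iff₀ (Real.rpow_pos_of_pos hxy _)]
  have hp1 : 0 ≤ s * (x + y) / x := div_nonneg (mul_nonneg hs0 hxy.le) hx
  have hp2 : 0 ≤ (1 - s) * (x + y) / y := div_nonneg (mul_nonneg h1s hxy.le) hy
  have hgm := Real.geom_mean_le_arith_mean2_weighted
    (div_nonneg hx hxy.le) (div_nonneg hy hxy.le) hp1 hp2
    (by field_simp)
  have hsum : x / (x + y) * (s * (x + y) / x) + y / (x + y) * ((1 - s) * (x + y) / y) = 1 := by
    field_simp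
    ring
  rw [hsum] at hgm
  have h2 : ((s * (x + y) / x) ^ (x / (x + y)) * ((1 - s) * (x + y) / y) ^ (y / (x + y)))
      ^ (x + y) ≤ 1 :=
    Real.rpow_le_one (mul_nonneg (Real.rpow_nonneg hp1 _) (Real.rpow_nonneg hp2 _)) hgm hxy.le
  rw [Real.mul_rpow (Real.rpow_nonneg hp1 _) (Real.rpow_nonneg hp2 _),
    ← Real.rpow_mul hp1, ← Real.rpow_mul hp2,
    div_mul_cancel₀ x hxy.ne', div_mul_cancel₀ y hxy.ne',
    Real.div_rpow (mul_nonneg hs0 hxy.le) hx x, Real.div_rpow (mul_nonneg h1s hxy.le) hy y,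
    Real.mul_rpow hs0 hxy.le, Real.mul_rpow h1s hxy.le, div_mul_div_comm,
    div_le_one (by positivity)] at h2
  calc s ^ x * (1 - s) ^ y * (x + y) ^ (x + y)
      = s ^ x * (x + y) ^ x * ((1 - s) ^ y * (x + y) ^ y) := by
        rw [Real.rpow_add hxy]; ring
    _ ≤ x ^ x * y ^ y := h2

lemma exp_int_le {q : ℝ} (hq : 0 < q) :
    (∫ s in Set.Ioo (0:ℝ) 1, Real.exp (-q * s)) ≤ 1 / q := by
  have heq : (∫ s in Set.Ioo (0:ℝ) 1, Real.exp (-q * s))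
      = ∫ s in (0:ℝ)..1, Real.exp (-q * s) := by
    rw [intervalIntegral.integral_of_le zero_le_one, integral_Ioc_eq_integral_Ioo]
  rw [heq]
  have hderiv : ∀ s ∈ Set.uIcc (0:ℝ) 1,
      HasDerivAt (fun u => -(Real.exp (-q * u) / q)) (Real.exp (-q * s)) s := by
    intro s _
    have h1 : HasDerivAt (fun u : ℝ => -q * u) (-q) s := by
      simpa using (hasDerivAt_id s).const_mul (-q)
    have h3 : HasDerivAt (fun u => -(Real.exp (-q * u) / q)) (-(Real.exp (-q * s) * -q / q)) s :=
      ((h1.exp).div_const q).neg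
    convert h3 using 1
    field_simp
  have hint : IntervalIntegrable (fun s => Real.exp (-q * s)) volume 0 1 :=
    (Continuous.intervalIntegrable (by continuity) 0 1)
  rw [intervalIntegral.integral_eq_sub_of_hasDerivAt hderiv hint]
  have h4 := Real.exp_pos (-q * 1)
  rw [show -q * 0 = 0 by ring, Real.exp_zero]
  have h5 : 0 ≤ Real.exp (-q * 1) / q := by positivity
  linarith

lemma oneF1_nonneg {α β : ℝ} (hα : 1 ≤ α) (hβ : α + 1 ≤ β) (z : ℝ) : 0 ≤ oneF1 α β z := by
  have hB := eulerBeta_pos (show (0:ℝ) < α by linarith) (show (0:ℝ) < β - α by linarith)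
  have h := kummer_rep hα (show 1 ≤ β - α by linarith) z
  have hnn : 0 ≤ ∫ t in Set.Ioo (0:ℝ) 1, t ^ (α - 1) * (1 - t) ^ (β - α - 1) * Real.exp (z * t) := by
    refine setIntegral_nonneg measurableSet_Ioo fun t ht => ?_
    exact mul_nonneg (kernel_nonneg ht.1.le ht.2.le) (Real.exp_pos _).le
  rw [h] at hnn
  exact nonneg_of_mul_nonneg_right hnn hB

lemma oneF1_le {α β p q : ℝ} (hα : 1 ≤ α) (hβ : α + 1 ≤ β) (hp : 0 < p) (hq : 4 * p ≤ q) :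
    oneF1 α β (-q) ≤ lam (α - 1) (β - α - 1) / (4 * p * eulerBeta α (β - α)) := by
  have hq0 : 0 < q := by linarith
  have hα0 : (0:ℝ) < α := by linarith
  have hβα : (0:ℝ) < β - α := by linarith
  have hB := eulerBeta_pos hα0 hβα
  have hlam := lam_nonneg (show (0:ℝ) ≤ α - 1 by linarith) (show (0:ℝ) ≤ β - α - 1 by linarith)
  have hrep := kummer_rep hα (show 1 ≤ β - α by linarith) (-q)
  set L := lam (α - 1) (β - α - 1) with hL
  have hint1 : IntegrableOn
      (fun t => t ^ (α - 1) * (1 - t) ^ (β - α - 1) * Real.exp (-q * t)) (Set.Ioo (0:ℝ) 1) :=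
    integrable_GE _ _ _ (by linarith) (by linarith)
  have hint2 : IntegrableOn (fun t => L * Real.exp (-q * t)) (Set.Ioo (0:ℝ) 1) := by
    refine integrableOn_of_bounded (by fun_prop) (C := L) fun t ht => ?_
    rw [abs_of_nonneg (mul_nonneg hlam (Real.exp_pos _).le)]
    calc L * Real.exp (-q * t) ≤ L * 1 := by
          apply mul_le_mul_of_nonneg_left _ hlam
          rw [← Real.exp_zero]
          exact Real.exp_le_exp.2 (by nlinarith [ht.1.le])
      _ = L := mul_one _
  have hmono : (∫ t in Set.Ioo (0:ℝ) 1, t ^ (α - 1) * (1 - t) ^ (β - α - 1) * Real.exp (-q * t))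
      ≤ ∫ t in Set.Ioo (0:ℝ) 1, L * Real.exp (-q * t) := by
    refine setIntegral_mono_on hint1 hint2 measurableSet_Ioo fun t ht => ?_
    exact mul_le_mul_of_nonneg_right
      (kernel_le_lam (by linarith) (by linarith) ht.1.le ht.2.le) (Real.exp_pos _).le
  have hexp : (∫ t in Set.Ioo (0:ℝ) 1, L * Real.exp (-q * t)) = L * ∫ t in Set.Ioo (0:ℝ) 1,
      Real.exp (-q * t) := MeasureTheory.integral_const_mul L _
  have hle2 : (∫ t in Set.Ioo (0:ℝ) 1, t ^ (α-1) * (1-t) ^ (β-α-1) * Real.exp (-q * t)) ≤ L / q := by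
    rw [hexp] at hmono
    calc _ ≤ L * ∫ t in Set.Ioo (0:ℝ) 1, Real.exp (-q * t) := hmono
      _ ≤ L * (1 / q) := mul_le_mul_of_nonneg_left (exp_int_le hq0) hlam
      _ = L / q := by ring
  rw [hrep] at hle2
  -- eulerBeta α (β - α) * oneF1 α β (-q) ≤ L / q
  rw [le_div_iff₀ (by positivity : (0:ℝ) < 4 * p * eulerBeta α (β - α))]
  calc oneF1 α β (-q) * (4 * p * eulerBeta α (β - α))
      = (eulerBeta α (β - α) * oneF1 α β (-q)) * (4 * p) := by ring
    _ ≤ (L / q) * (4 * p) := by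
        apply mul_le_mul_of_nonneg_right hle2 (by linarith)
    _ ≤ L := by
        rw [div_mul_eq_mul_div, div_le_iff₀ hq0]
        nlinarith

lemma oneF1_measurable {α β : ℝ} (hα : 1 ≤ α) (hβ : α + 1 ≤ β) :
    Measurable fun z : ℝ => oneF1 α β z := by
  have hα0 : (0:ℝ) < α := by linarith
  have hβα : (0:ℝ) < β - α := by linarith
  have hB := eulerBeta_pos hα0 hβα
  have hmono : Monotone fun z : ℝ => eulerBeta α (β - α) * oneF1 α β z := by
    intro z₁ z₂ hz
    simp only
    rw [← kummer_rep hα (show 1 ≤ β - α by linarith) z₁,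
      ← kummer_rep hα (show 1 ≤ β - α by linarith) z₂]
    refine setIntegral_mono_on (integrable_GE _ _ _ (by linarith) (by linarith))
      (integrable_GE _ _ _ (by linarith) (by linarith)) measurableSet_Ioo fun t ht => ?_
    apply mul_le_mul_of_nonneg_left _ (kernel_nonneg ht.1.le ht.2.le)
    exact Real.exp_le_exp.2 (mul_le_mul_of_nonneg_right hz ht.1.le)
  have hfun : (fun z : ℝ => oneF1 α β z)
      = fun z => (eulerBeta α (β - α))⁻¹ * (eulerBeta α (β - α) * oneF1 α β z) := by
    funext z
    field_simp
  rw [hfun]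
  exact measurable_const.mul hmono.measurable


theorem stmt5 (b c α β p z : ℝ) (hb : 1 ≤ b) (hc : b + 1 ≤ c) (hα : 1 ≤ α)
    (hβ : α + 1 ≤ β) (hp : 0 < p) :
    genOneF1 α β p b c z ≤
      lam (α - 1) (β - α - 1) / (4 * p * eulerBeta α (β - α)) * oneF1 b c z := by
  have hcb : 1 ≤ c - b := by linarith
  have hBb := eulerBeta_pos (show (0:ℝ) < b by linarith) (show (0:ℝ) < c - b by linarith)
  have hBα := eulerBeta_pos (show (0:ℝ) < α by linarith) (show (0:ℝ) < β - α by linarith)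
  have hlam := lam_nonneg (show (0:ℝ) ≤ α - 1 by linarith) (show (0:ℝ) ≤ β - α - 1 by linarith)
  set K := lam (α - 1) (β - α - 1) / (4 * p * eulerBeta α (β - α)) with hK
  have hK0 : 0 ≤ K := div_nonneg hlam (by positivity)
  set F : ℝ → ℝ := fun t => oneF1 α β (-p / (t * (1 - t))) with hFdef
  have hFmeas : Measurable F := (oneF1_measurable hα hβ).comp (by fun_prop)
  have hFle : ∀ t ∈ Set.Ioo (0:ℝ) 1, F t ≤ K := by
    intro t ht
    have hd : 0 < t * (1 - t) := mul_pos ht.1 (by linarith [ht.2])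
    have harg : -p / (t * (1 - t)) = -(p / (t * (1 - t))) := by ring
    rw [hFdef]
    simp only []
    rw [harg]
    apply oneF1_le hα hβ hp
    rw [le_div_iff₀ hd]
    nlinarith [ht.1, ht.2, sq_nonneg (t - 1/2), hp]
  have hF0 : ∀ t, 0 ≤ F t := fun t => oneF1_nonneg hα hβ _
  have hGint := integrable_GE (b - 1) (c - b - 1) z (by linarith) (by linarith)
  set G : ℝ → ℝ := fun t => t ^ (b - 1) * (1 - t) ^ (c - b - 1) * Real.exp (z * t) with hGdef
  have hG0 : ∀ t ∈ Set.Ioo (0:ℝ) 1, 0 ≤ G t := fun t ht =>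
    mul_nonneg (kernel_nonneg ht.1.le ht.2.le) (Real.exp_pos _).le
  have hGle : ∀ t ∈ Set.Ioo (0:ℝ) 1, G t ≤ Real.exp |z| := by
    intro t ht
    have h1 := kernel_le_one (show (0:ℝ) ≤ b - 1 by linarith)
      (show (0:ℝ) ≤ c - b - 1 by linarith) ht.1.le ht.2.le
    have h2 : Real.exp (z * t) ≤ Real.exp |z| := by
      apply Real.exp_le_exp.2
      calc z * t ≤ |z * t| := le_abs_self _
        _ = |z| * |t| := abs_mul z t
        _ ≤ |z| * 1 := mul_le_mul_of_nonneg_left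
            (by rw [abs_of_nonneg ht.1.le]; exact ht.2.le) (abs_nonneg z)
        _ = |z| := mul_one _
    calc G t ≤ 1 * Real.exp (z * t) :=
          mul_le_mul_of_nonneg_right h1 (Real.exp_pos _).le
      _ ≤ Real.exp |z| := by rw [one_mul]; exact h2
  have hGmeas : Measurable G := by rw [hGdef]; fun_prop
  have hGF_int : IntegrableOn (fun t => G t * F t) (Set.Ioo (0:ℝ) 1) := by
    refine integrableOn_of_bounded (hGmeas.mul hFmeas) (C := Real.exp |z| * K) fun t ht => ?_
    rw [abs_of_nonneg (mul_nonneg (hG0 t ht) (hF0 t))]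
    exact mul_le_mul (hGle t ht) (hFle t ht) (hF0 t) (Real.exp_pos _).le
  have hmono : (∫ t in Set.Ioo (0:ℝ) 1, G t * F t) ≤ ∫ t in Set.Ioo (0:ℝ) 1, K * G t := by
    refine setIntegral_mono_on hGF_int (hGint.const_mul K) measurableSet_Ioo fun t ht => ?_
    calc G t * F t ≤ G t * K := mul_le_mul_of_nonneg_left (hFle t ht) (hG0 t ht)
      _ = K * G t := mul_comm _ _
  have hrepb := kummer_rep hb hcb z
  have hgen : genOneF1 α β p b c z
      = (1 / eulerBeta b (c - b)) * ∫ t in Set.Ioo (0:ℝ) 1, G t * F t := by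
    rw [genOneF1, intervalIntegral.integral_of_le zero_le_one, integral_Ioc_eq_integral_Ioo]
  rw [hgen]
  calc (1 / eulerBeta b (c - b)) * ∫ t in Set.Ioo (0:ℝ) 1, G t * F t
      ≤ (1 / eulerBeta b (c - b)) * ∫ t in Set.Ioo (0:ℝ) 1, K * G t :=
        mul_le_mul_of_nonneg_left hmono (by positivity)
    _ = (1 / eulerBeta b (c - b)) * (K * ∫ t in Set.Ioo (0:ℝ) 1, G t) := by
        rw [MeasureTheory.integral_const_mul]
    _ = (1 / eulerBeta b (c - b)) * (K * (eulerBeta b (c - b) * oneF1 b c z)) := by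
        rw [hGdef, hrepb]
    _ = K * oneF1 b c z := by field_simp
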